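/- Let E be a finite-dimensional real vector space, λ ∈ E, S ⊆ E a set with λ ∈ S, and h : E → ℝ a linear form such that h(s) ≤ h(λ) for all s ∈ S, with equality if and only if s = λ. Let π : [0,1] → E be continuous with π(1) − π(0) = λ, and suppose there is a subdivision 0 = t_1 < … < t_n = 1 such that on each [t_i, t_{i+1}], π is affine with constant derivative belonging to S. Then π(t) = π(0) + t·λ for all t ∈ [0,1]. -/

import Mathlib

/-- Let `E` be a finite-dimensional real vector space, `l ∈ E`, `S ⊆ E` with `l ∈ S`, and
`h : E → ℝ` a linear form such that `h s ≤ h l` for all `s ∈ S`, with equality iff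
`s = l`. If `γ : [0,1] → E` is continuous with `γ 1 - γ 0 = l` and piecewise affine with
constant derivative in `S` on each piece of a subdivision `0 = t_1 < … < t_n = 1`, then
`γ s = γ 0 + s • l` for all `s ∈ [0,1]`. -/
theorem lambda_path_unique
    {E : Type*} [NormedAddCommGroup E] [NormedSpace ℝ E] [FiniteDimensional ℝ E]
    (l : E) (S : Set E) (hlS : l ∈ S) (h : E →ₗ[ℝ] ℝ)
    (hle : ∀ s ∈ S, h s ≤ h l) (hiff : ∀ s ∈ S, (h s = h l ↔ s = l))
    (γ : ℝ → E) (hcont : ContinuousOn γ (Set.Icc 0 1)) (hend : γ 1 - γ 0 = l)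
    (n : ℕ) (hn : 0 < n) (t : Fin (n + 1) → ℝ) (ht : StrictMono t)
    (ht0 : t 0 = 0) (ht1 : t (Fin.last n) = 1)
    (haff : ∀ i : Fin n, ∃ d ∈ S, ∀ x ∈ Set.Icc (t i.castSucc) (t i.succ),
      γ x = γ (t i.castSucc) + (x - t i.castSucc) • d) :
    ∀ s ∈ Set.Icc (0 : ℝ) 1, γ s = γ 0 + s • l := by
  choose d hdS hform using haff
  -- ℕ-indexed versions
  set T : ℕ → ℝ := fun k => t ⟨min k n, Nat.lt_succ_of_le (min_le_right _ _)⟩ with hTdef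
  set D : ℕ → E := fun k => if hk : k < n then d ⟨k, hk⟩ else 0 with hDdef
  have hT : ∀ k (hk : k ≤ n), T k = t ⟨k, Nat.lt_succ_of_le hk⟩ := by
    intro k hk
    simp only [hTdef]
    congr 1
    exact Fin.ext (min_eq_left hk)
  have hT0 : T 0 = 0 := by rw [hT 0 (Nat.zero_le _)]; exact ht0
  have hTn : T n = 1 := by rw [hT n le_rfl]; exact ht1
  have hTmono : ∀ j k, j ≤ k → k ≤ n → T j ≤ T k := by
    intro j k hjk hk
    rw [hT j (hjk.trans hk), hT k hk]
    exact ht.monotone hjk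
  have hTpos : ∀ k, k ≤ n → 0 ≤ T k := by
    intro k hk
    rw [← hT0]; exact hTmono 0 k (Nat.zero_le _) hk
  have hDd : ∀ (k) (hk : k < n), D k = d ⟨k, hk⟩ := by
    intro k hk; simp only [hDdef, dif_pos hk]
  have hcs : ∀ (k) (hk : k < n), t (Fin.castSucc ⟨k, hk⟩) = T k := by
    intro k hk; rw [hT k hk.le]; rfl
  have hsc : ∀ (k) (hk : k < n), t (Fin.succ ⟨k, hk⟩) = T (k + 1) := by
    intro k hk; rw [hT (k+1) hk]; rfl
  have hTlt : ∀ (k) (hk : k < n), T k < T (k + 1) := by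
    intro k hk
    rw [← hcs k hk, ← hsc k hk]
    exact ht Fin.castSucc_lt_succ
  have hstep : ∀ (k) (hk : k < n),
      γ (T (k + 1)) = γ (T k) + (T (k + 1) - T k) • D k := by
    intro k hk
    have := hform ⟨k, hk⟩ (t (Fin.succ ⟨k, hk⟩))
      ⟨(ht Fin.castSucc_lt_succ).le, le_rfl⟩
    rw [hcs k hk, hsc k hk] at this
    rw [hDd k hk]
    exact this
  -- telescoping
  have tele : ∀ k, k ≤ n →
      γ (T k) = γ 0 + ∑ i ∈ Finset.range k, (T (i + 1) - T i) • D i := by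
    intro k
    induction k with
    | zero => intro _; simp [hT0]
    | succ k ih =>
      intro hk
      have hk' : k < n := hk
      rw [Finset.sum_range_succ, hstep k hk', ih hk'.le, add_assoc]
  have hsumT : ∑ i ∈ Finset.range n, (T (i + 1) - T i) = 1 := by
    rw [Finset.sum_range_sub, hTn, hT0, sub_zero]
  have hsuml : ∑ i ∈ Finset.range n, (T (i + 1) - T i) • D i = l := by
    have h2 := tele n le_rfl
    rw [hTn] at h2
    have h3 : γ 0 + ∑ i ∈ Finset.range n, (T (i + 1) - T i) • D i - γ 0 = l := by
      rw [← h2]; exact hend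
    simpa using h3
  -- all derivatives equal l
  have hdl : ∀ (k) (hk : k < n), D k = l := by
    have hzero : ∑ i ∈ Finset.range n, (T (i + 1) - T i) * (h l - h (D i)) = 0 := by
      have h1 : ∑ i ∈ Finset.range n, (T (i + 1) - T i) * h (D i) = h l := by
        have := congrArg h hsuml
        rw [map_sum] at this
        simpa [smul_eq_mul] using this
      have := Finset.sum_sub_distrib (s := Finset.range n)
        (f := fun i => (T (i + 1) - T i) * h l)
        (g := fun i => (T (i + 1) - T i) * h (D i))
      calc ∑ i ∈ Finset.range n, (T (i + 1) - T i) * (h l - h (D i))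
          = ∑ i ∈ Finset.range n, ((T (i + 1) - T i) * h l
              - (T (i + 1) - T i) * h (D i)) := by
            apply Finset.sum_congr rfl; intro i _; ring
        _ = (∑ i ∈ Finset.range n, (T (i + 1) - T i)) * h l
              - ∑ i ∈ Finset.range n, (T (i + 1) - T i) * h (D i) := by
            rw [this, Finset.sum_mul]
        _ = 0 := by rw [hsumT, h1]; ring
    have hnonneg : ∀ i ∈ Finset.range n,
        0 ≤ (T (i + 1) - T i) * (h l - h (D i)) := by
      intro i hi
      have hi' : i < n := Finset.mem_range.mp hi
      have h1 : 0 ≤ T (i + 1) - T i := sub_nonneg.mpr (hTlt i hi').le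
      have h2 : 0 ≤ h l - h (D i) := by
        rw [hDd i hi']
        exact sub_nonneg.mpr (hle _ (hdS _))
      exact mul_nonneg h1 h2
    intro k hk
    have := (Finset.sum_eq_zero_iff_of_nonneg hnonneg).mp hzero k
      (Finset.mem_range.mpr hk)
    have hΔ : T (k + 1) - T k ≠ 0 := by
      have := hTlt k hk; linarith
    have heq : h (D k) = h l := by
      rcases mul_eq_zero.mp this with h' | h'
      · exact absurd h' hΔ
      · linarith
    rw [hDd k hk] at heq ⊢
    exact (hiff _ (hdS _)).mp heq
  -- final claim by induction
  have final : ∀ k, k ≤ n → ∀ s ∈ Set.Icc (0 : ℝ) (T k), γ s = γ 0 + s • l := by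
    intro k
    induction k with
    | zero =>
      intro _ s hs
      rw [hT0] at hs
      have : s = 0 := le_antisymm hs.2 hs.1
      simp [this]
    | succ k ih =>
      intro hk s hs
      have hk' : k < n := hk
      rcases le_or_gt s (T k) with hle' | hlt'
      · exact ih hk'.le s ⟨hs.1, hle'⟩
      · have hmem : s ∈ Set.Icc (t (Fin.castSucc ⟨k, hk'⟩)) (t (Fin.succ ⟨k, hk'⟩)) := by
          rw [hcs k hk', hsc k hk']
          exact ⟨hlt'.le, hs.2⟩
        have := hform ⟨k, hk'⟩ s hmem
        rw [hcs k hk'] at this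
        have hdk : d ⟨k, hk'⟩ = l := by rw [← hDd k hk']; exact hdl k hk'
        rw [hdk] at this
        have hTk : γ (T k) = γ 0 + T k • l :=
          ih hk'.le (T k) ⟨hTpos k hk'.le, le_rfl⟩
        rw [this, hTk, sub_smul, add_assoc]
        congr 1
        abel
  intro s hs
  exact final n le_rfl s (by rwa [hTn])
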